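/- Let $(A,\circ_A)$ and $(B,\circ_B)$ be Zinbiel algebras, $(\rho,\mu)$ an action of $A$ on $B$, and $T:B\to A$ a relative Rota-Baxter operator of weight $\lambda$, i.e., $Tu\circ_A Tv = T(\rho(Tu)v + \mu(Tv)u + \lambda\, u\circ_B v)$. Then the operation $u\cdot v := \rho(Tu)v + \mu(Tv)u + \lambda\, u\circ_B v$ defines a Zinbiel algebra structure on $B$, and $T$ is a Zinbiel algebra homomorphism from $(B,\cdot)$ to $(A,\circ_A)$. -/
import Mathlib


/-- The descendent product `u · v := ρ(Tu)v + μ(Tv)u + λ u ∘_B v` of a relative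
Rota-Baxter operator. -/
def relRBDot {K : Type*} [Field K] {A : Type*} [AddCommGroup A] [Module K A]
    {B : Type*} [AddCommGroup B] [Module K B]
    (mulB : B →ₗ[K] B →ₗ[K] B) (ρ μ : A →ₗ[K] Module.End K B)
    (T : B →ₗ[K] A) (l : K) (u v : B) : B :=
  ρ (T u) v + μ (T v) u + l • mulB u v

/-- Let `(ρ, μ)` be an action of a Zinbiel algebra `(A, ∘_A)` on a Zinbiel algebra
`(B, ∘_B)` and `T : B → A` a relative Rota-Baxter operator of weight `λ`.  Then
`u · v := ρ(Tu)v + μ(Tv)u + λ u ∘_B v` is a Zinbiel algebra structure on `B`, and `T`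
is a Zinbiel algebra homomorphism from `(B, ·)` to `(A, ∘_A)`. -/
theorem relative_rota_baxter_descendent {K : Type*} [Field K]
    {A : Type*} [AddCommGroup A] [Module K A]
    {B : Type*} [AddCommGroup B] [Module K B]
    (mulA : A →ₗ[K] A →ₗ[K] A)
    (hZA : ∀ x y z : A, mulA x (mulA y z) = mulA (mulA x y + mulA y x) z)
    (mulB : B →ₗ[K] B →ₗ[K] B)
    (hZB : ∀ u v w : B, mulB u (mulB v w) = mulB (mulB u v + mulB v u) w)
    (ρ μ : A →ₗ[K] Module.End K B)
    (hrep1 : ∀ x y : A, ρ x * ρ y = ρ (mulA x y) + ρ (mulA y x))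
    (hrep2 : ∀ x y : A, ρ x * μ y = μ (mulA x y))
    (hrep3 : ∀ x y : A, μ (mulA x y) = μ y * ρ x + μ y * μ x)
    (hact1 : ∀ (x : A) (u v : B), mulB u (μ x v) = μ x (mulB u v + mulB v u))
    (hact2 : ∀ (x : A) (u v : B), mulB u (ρ x v) = mulB (μ x u) v + mulB (ρ x u) v)
    (hact3 : ∀ (x : A) (u v : B), ρ x (mulB u v) = mulB (μ x u) v + mulB (ρ x u) v)
    (T : B →ₗ[K] A) (l : K)
    (hT : ∀ u v : B, mulA (T u) (T v) = T (ρ (T u) v + μ (T v) u + l • mulB u v)) :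
    (∀ u v w : B,
      relRBDot mulB ρ μ T l u (relRBDot mulB ρ μ T l v w)
        = relRBDot mulB ρ μ T l
            (relRBDot mulB ρ μ T l u v + relRBDot mulB ρ μ T l v u) w) ∧
    (∀ u v : B, T (relRBDot mulB ρ μ T l u v) = mulA (T u) (T v)) := by
  have hTe : ∀ u v : B, T (ρ (T u) v + μ (T v) u + l • mulB u v) = mulA (T u) (T v) :=
    fun u v => (hT u v).symm
  have hrep1' : ∀ (x y : A) (b : B), ρ x (ρ y b) = ρ (mulA x y) b + ρ (mulA y x) b := by
    intro x y b
    simpa using DFunLike.congr_fun (hrep1 x y) b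
  have hrep2' : ∀ (x y : A) (b : B), ρ x (μ y b) = μ (mulA x y) b := by
    intro x y b
    simpa using DFunLike.congr_fun (hrep2 x y) b
  have hrep3' : ∀ (x y : A) (b : B), μ (mulA x y) b = μ y (ρ x b) + μ y (μ x b) := by
    intro x y b
    simpa using DFunLike.congr_fun (hrep3 x y) b
  constructor
  · intro u v w
    simp only [relRBDot]
    rw [hTe v w, map_add T, hTe u v, hTe v u]
    simp only [map_add, map_smul, LinearMap.add_apply, LinearMap.smul_apply, smul_add]
    rw [hrep1' (T u) (T v) w, hrep2' (T u) (T w) v, hrep3' (T u) (T w) v,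
      hrep3' (T v) (T w) u, hact3 (T u) v w, hact2 (T v) u w, hact1 (T w) u v,
      hZB u v w]
    simp only [map_add, LinearMap.add_apply, smul_add]
    abel
  · intro u v
    exact hTe u v
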